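/- Let n ≥ 3. For a partition λ = (λ_1 ≥ λ_2 ≥ …) of n, let f_n(λ) be the element of the free abelian group on the set of partitions of n−1 given by f_n(λ) = Σ_{i ≥ 1, λ_i > λ_{i+1}} [λ_1 ≥ … ≥ λ_{i-1} ≥ λ_i − 1 ≥ λ_{i+1} ≥ …]. If λ and λ' are partitions of n with f_n(λ) = f_n(λ') in this free abelian group, then λ = λ'. -/

import Mathlib

open scoped Classical

noncomputable section

/-- `lam : ℕ → ℕ` is a partition of `n`: a weakly decreasing sequence of
nonnegative integers, eventually zero, with sum `n`. -/
def IsPartitionFun (n : ℕ) (lam : ℕ → ℕ) : Prop :=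
  Antitone lam ∧ (Function.support lam).Finite ∧ ∑ᶠ i, lam i = n

/-- `f_n(λ) = Σ_{i : λ_i > λ_{i+1}} [λ with λ_i decreased by 1]`, an element of the
free abelian group on sequences (for partitions `λ` of `n`, all terms are
partitions of `n−1`, so equality of such elements is equality in the free
abelian group `(P_{n-1})` on partitions of `n−1`). -/
def partDec (lam : ℕ → ℕ) : FreeAbelianGroup (ℕ → ℕ) :=
  ∑ᶠ i ∈ {i : ℕ | lam (i + 1) < lam i},
    FreeAbelianGroup.of (Function.update lam i (lam i - 1))

namespace Stmt2Aux

def corners (lam : ℕ → ℕ) : Set ℕ := {i | lam (i + 1) < lam i}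

def upd (lam : ℕ → ℕ) (i : ℕ) : ℕ → ℕ := Function.update lam i (lam i - 1)

def dset (lam : ℕ → ℕ) : Set (ℕ → ℕ) := upd lam '' corners lam

lemma corners_finite {n : ℕ} {lam : ℕ → ℕ} (h : IsPartitionFun n lam) :
    (corners lam).Finite :=
  h.2.1.subset (fun i hi => by
    simp only [corners, Set.mem_setOf_eq] at hi
    simp only [Function.mem_support]
    omega)

lemma upd_inj {lam : ℕ → ℕ} {i j : ℕ} (hi : i ∈ corners lam)
    (h : upd lam i = upd lam j) : i = j := by
  by_contra hne
  have h1 := congrFun h i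
  rw [upd, upd, Function.update_self, Function.update_of_ne hne] at h1
  simp only [corners, Set.mem_setOf_eq] at hi
  omega

lemma mem_dset_iff {n : ℕ} {lam : ℕ → ℕ} (h : IsPartitionFun n lam) (x : ℕ → ℕ) :
    x ∈ dset lam ↔ FreeAbelianGroup.toFinsupp (partDec lam) x ≠ 0 := by
  have hfin := corners_finite h
  have h1 : partDec lam = ∑ i ∈ hfin.toFinset, FreeAbelianGroup.of (upd lam i) := by
    exact finsum_mem_eq_finite_toFinset_sum _ hfin
  rw [h1, map_sum]
  simp only [FreeAbelianGroup.toFinsupp_of]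
  rw [Finsupp.finset_sum_apply]
  simp only [Finsupp.single_apply]
  rw [Finset.sum_boole]
  rw [ne_eq, Nat.cast_eq_zero, Finset.card_eq_zero, ← ne_eq,
    ← Finset.nonempty_iff_ne_empty]
  simp only [Finset.filter_nonempty_iff, hfin.mem_toFinset]
  constructor
  · rintro ⟨i, hi, rfl⟩; exact ⟨i, hi, rfl⟩
  · rintro ⟨i, hi, rfl⟩; exact ⟨i, hi, rfl⟩


lemma corners_nonempty {n : ℕ} {lam : ℕ → ℕ} (h : IsPartitionFun n lam)
    (hn : 0 < n) : (corners lam).Nonempty := by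
  have hsupp : (Function.support lam).Nonempty := by
    by_contra he
    rw [Set.not_nonempty_iff_eq_empty, Function.support_eq_empty_iff] at he
    have h0 : ∑ᶠ i, lam i = 0 := by
      rw [he]; simp
    rw [h.2.2] at h0; omega
  obtain ⟨N, hN, hmax⟩ := Set.Finite.exists_maximalFor id _ h.2.1 hsupp
  refine ⟨N, ?_⟩
  have hN1 : lam (N + 1) = 0 := by
    by_contra h0
    have : N + 1 ≤ N := hmax h0 (Nat.le_succ N)
    omega
  have : lam N ≠ 0 := hN
  simp only [corners, Set.mem_setOf_eq]
  omega

lemma le_of_two_corners {lam mu : ℕ → ℕ}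
    (h2 : ∃ i ∈ corners lam, ∃ j ∈ corners lam, i ≠ j)
    (hD : dset lam ⊆ dset mu) : lam ≤ mu := by
  intro k
  obtain ⟨i, hi, j, hj, hij⟩ := h2
  obtain ⟨c, hc, hck⟩ : ∃ c ∈ corners lam, c ≠ k := by
    rcases eq_or_ne i k with rfl | hik
    · exact ⟨j, hj, Ne.symm hij⟩
    · exact ⟨i, hi, hik⟩
  obtain ⟨d, hd, hde⟩ := hD ⟨c, hc, rfl⟩
  have h1 : lam k = upd lam c k := (Function.update_of_ne (Ne.symm hck) _ _).symm
  rw [h1, ← hde]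
  rcases eq_or_ne k d with rfl | hkd
  · rw [upd, Function.update_self]
    exact Nat.sub_le _ _
  · rw [upd, Function.update_of_ne hkd]

lemma rect {n : ℕ} {lam : ℕ → ℕ} (h : IsPartitionFun n lam) {i : ℕ}
    (hC : corners lam = {i}) :
    (∀ j, j ≤ i → lam j = lam 0) ∧ (∀ j, i < j → lam j = 0) ∧
      n = (i + 1) * lam 0 := by
  have hnc : ∀ j, j ≠ i → lam (j + 1) = lam j := by
    intro j hj
    have h1 : ¬ lam (j + 1) < lam j := by
      intro hlt
      have : j ∈ corners lam := hlt
      rw [hC, Set.mem_singleton_iff] at this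
      exact hj this
    have h2 : lam (j + 1) ≤ lam j := h.1 (Nat.le_succ j)
    omega
  have hle : ∀ j, j ≤ i → lam j = lam 0 := by
    intro j hj
    induction j with
    | zero => rfl
    | succ m ih => rw [hnc m (by omega), ih (by omega)]
  have hgt' : ∀ j, i < j → lam j = lam (i + 1) := by
    intro j hj
    induction j with
    | zero => omega
    | succ m ih =>
      rcases eq_or_ne m i with rfl | hmi
      · rfl
      · have hm : i < m := by omega
        rw [hnc m hmi, ih hm]
  have hi1 : lam (i + 1) = 0 := by
    by_contra h0
    have hinf : (Set.Ioi i).Infinite := Set.Ioi_infinite i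
    exact hinf (h.2.1.subset fun j hj => by
      simp only [Function.mem_support]
      rw [hgt' j hj]; exact h0)
  have hgt : ∀ j, i < j → lam j = 0 := fun j hj => by rw [hgt' j hj, hi1]
  refine ⟨hle, hgt, ?_⟩
  have hsub : Function.support lam ⊆ ↑(Finset.range (i + 1)) := by
    intro j hj
    simp only [Finset.coe_range, Set.mem_Iio]
    by_contra hc
    exact hj (hgt j (by omega))
  rw [← h.2.2, finsum_eq_sum_of_support_subset _ hsub]
  rw [Finset.sum_congr rfl fun j hj => hle j (by
    simpa using Nat.lt_succ_iff.mp (Finset.mem_range.mp hj))]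
  rw [Finset.sum_const, Finset.card_range, smul_eq_mul]

lemma one_corner_case {n : ℕ} (hn : 3 ≤ n) {lam mu : ℕ → ℕ}
    (hlam : IsPartitionFun n lam) (hmu : IsPartitionFun n mu)
    {i i' : ℕ} (hCl : corners lam = {i}) (hCm : corners mu = {i'})
    (hii : i < i') (he : upd lam i = upd mu i') : False := by
  obtain ⟨hl1, hl2, hl3⟩ := rect hlam hCl
  obtain ⟨hm1, hm2, hm3⟩ := rect hmu hCm
  have hci : i ∈ corners lam := hCl ▸ rfl
  have hci' : i' ∈ corners mu := hCm ▸ rfl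
  simp only [corners, Set.mem_setOf_eq] at hci hci'
  have hlam0 : 0 < lam 0 := by have := hl1 i le_rfl; omega
  have hmu0 : 0 < mu 0 := by have := hm1 i' le_rfl; omega
  have e1 := congrFun he i'
  rw [upd, upd, Function.update_of_ne hii.ne', Function.update_self] at e1
  have hmu1 : mu 0 = 1 := by
    have h1 := hl2 i' hii
    have h2 := hm1 i' le_rfl
    omega
  have e0 := congrFun he 0
  rcases Nat.eq_zero_or_pos i with rfl | hipos
  · rw [upd, upd, Function.update_self,
      Function.update_of_ne (by omega : (0 : ℕ) ≠ i')] at e0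
    have := hm1 0 (by omega)
    -- lam 0 - 1 = mu 0 = 1, so lam 0 = 2, n = 2
    omega
  · rw [upd, upd, Function.update_of_ne (by omega : (0 : ℕ) ≠ i),
      Function.update_of_ne (by omega : (0 : ℕ) ≠ i')] at e0
    -- e0 : lam 0 = mu 0 = 1, n = i+1 = i'+1, contradiction with i < i'
    rw [e0.trans hmu1, mul_one] at hl3
    rw [hmu1, mul_one] at hm3
    omega

end Stmt2Aux

/-- for `n ≥ 3`, a partition `λ` of `n` is determined by
`f_n(λ) ∈ (P_{n-1})`. -/
theorem statement2 (n : ℕ) (hn : 3 ≤ n) (lam mu : ℕ → ℕ)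
    (hlam : IsPartitionFun n lam) (hmu : IsPartitionFun n mu)
    (h : partDec lam = partDec mu) : lam = mu := by
  open Stmt2Aux in
  have hD : dset lam = dset mu := Set.ext fun x => by
    rw [Stmt2Aux.mem_dset_iff hlam, Stmt2Aux.mem_dset_iff hmu, h]
  have hCl := Stmt2Aux.corners_nonempty hlam (by omega)
  have hCm := Stmt2Aux.corners_nonempty hmu (by omega)
  by_cases h2 : ∃ i ∈ Stmt2Aux.corners lam, ∃ j ∈ Stmt2Aux.corners lam, i ≠ j
  · have h2' : ∃ i ∈ Stmt2Aux.corners mu, ∃ j ∈ Stmt2Aux.corners mu, i ≠ j := by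
      obtain ⟨i, hi, j, hj, hij⟩ := h2
      have hma : Stmt2Aux.upd lam i ∈ Stmt2Aux.dset mu := by
        rw [← hD]; exact ⟨i, hi, rfl⟩
      have hmb : Stmt2Aux.upd lam j ∈ Stmt2Aux.dset mu := by
        rw [← hD]; exact ⟨j, hj, rfl⟩
      obtain ⟨a, ha, hae⟩ := hma
      obtain ⟨b, hb, hbe⟩ := hmb
      refine ⟨a, ha, b, hb, fun hab => hij ?_⟩
      subst hab
      exact Stmt2Aux.upd_inj hi (hae.symm.trans hbe)
    exact le_antisymm (Stmt2Aux.le_of_two_corners h2 hD.le)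
      (Stmt2Aux.le_of_two_corners h2' hD.ge)
  · push_neg at h2
    obtain ⟨i, hi⟩ := hCl
    have hCl1 : Stmt2Aux.corners lam = {i} :=
      Set.eq_singleton_iff_unique_mem.mpr ⟨hi, fun j hj => h2 j hj i hi⟩
    have hDl : Stmt2Aux.dset lam = {Stmt2Aux.upd lam i} := by
      rw [Stmt2Aux.dset, hCl1, Set.image_singleton]
    obtain ⟨i', hi'⟩ := hCm
    have hCm1 : Stmt2Aux.corners mu = {i'} := by
      refine Set.eq_singleton_iff_unique_mem.mpr ⟨hi', fun j hj => ?_⟩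
      have h1 : Stmt2Aux.upd mu j ∈ Stmt2Aux.dset lam := by
        rw [hD]; exact ⟨j, hj, rfl⟩
      have h2 : Stmt2Aux.upd mu i' ∈ Stmt2Aux.dset lam := by
        rw [hD]; exact ⟨i', hi', rfl⟩
      rw [hDl, Set.mem_singleton_iff] at h1 h2
      exact Stmt2Aux.upd_inj hj (h1.trans h2.symm)
    have he : Stmt2Aux.upd lam i = Stmt2Aux.upd mu i' := by
      have h1 : Stmt2Aux.upd lam i ∈ Stmt2Aux.dset mu := by
        rw [← hD]; exact ⟨i, hi, rfl⟩
      rw [Stmt2Aux.dset, hCm1, Set.image_singleton, Set.mem_singleton_iff] at h1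
      exact h1
    rcases lt_trichotomy i i' with hlt | heq | hgt
    · exact absurd (Stmt2Aux.one_corner_case hn hlam hmu hCl1 hCm1 hlt he) id
    · subst heq
      obtain ⟨hl1, hl2, hl3⟩ := Stmt2Aux.rect hlam hCl1
      obtain ⟨hm1, hm2, hm3⟩ := Stmt2Aux.rect hmu hCm1
      have hval : lam 0 = mu 0 := by
        have := hl3.symm.trans hm3
        exact Nat.eq_of_mul_eq_mul_left (by omega) this
      funext j
      rcases le_or_gt j i with hj | hj
      · rw [hl1 j hj, hm1 j hj, hval]
      · rw [hl2 j hj, hm2 j hj]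
    · exact absurd (Stmt2Aux.one_corner_case hn hmu hlam hCm1 hCl1 hgt he.symm) id
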